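/- The equation u = (k-1) log(1+u) has a unique solution u > 0 for every integer k ≥ 3, and as k → ∞ the quantity α* = Ω_k (1 + u(1+1/u)^{k-2})/(k(k-1)) satisfies α* = (Ω_k/k)(log k + o(log k)). -/

import Mathlib

open Filter

section auxstmt11
open Real Set

-- concavity chord lemma
lemma aux_concave {a b : ℝ} (ha : 0 < a) (hab : a < b) :
    a / b * Real.log (1 + b) < Real.log (1 + a) := by
  have hb : 0 < b := ha.trans hab
  have ht : a / b < 1 := (div_lt_one hb).2 hab
  have ht0 : 0 < a / b := div_pos ha hb
  have h := strictConcaveOn_log_Ioi.2 (x := 1) (y := 1 + b)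
    (by norm_num) (by simp [Set.mem_Ioi]; linarith) (by linarith)
    (sub_pos.2 ht) ht0 (by ring)
  have hxy : (1 - a/b) • (1:ℝ) + (a/b) • (1 + b) = 1 + a := by
    field_simp
    rw [smul_eq_mul, smul_eq_mul, div_mul_eq_mul_div, div_mul_eq_mul_div, ← add_div, div_eq_iff hb.ne']; ring
  rw [hxy] at h
  simpa [Real.log_one, smul_eq_mul] using h

lemma aux_unique {w a b : ℝ} (ha : 0 < a ∧ a = w * Real.log (1 + a))
    (hb : 0 < b ∧ b = w * Real.log (1 + b)) : a = b := by
  obtain ⟨ha0, hae⟩ := ha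
  obtain ⟨hb0, hbe⟩ := hb
  have hw : 0 < w := by
    by_contra h
    push_neg at h
    have : 0 < Real.log (1 + a) := Real.log_pos (by linarith)
    nlinarith
  rcases lt_trichotomy a b with h | h | h
  · exfalso
    have hc := aux_concave ha0 h
    have : a < w * Real.log (1 + a) := by
      have : a / b * (w * Real.log (1 + b)) < w * Real.log (1 + a) := by
        have := mul_lt_mul_of_pos_left hc hw
        calc a / b * (w * Real.log (1+b)) = w * (a/b * Real.log (1+b)) := by ring
        _ < w * Real.log (1+a) := this
      rw [← hbe] at this
      have hb' : b ≠ 0 := ne_of_gt hb0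
      field_simp at this
      linarith [this]
    linarith [hae ▸ this]
  · exact h
  · exfalso
    have hc := aux_concave hb0 h
    have : b < w * Real.log (1 + b) := by
      have : b / a * (w * Real.log (1 + a)) < w * Real.log (1 + b) := by
        have := mul_lt_mul_of_pos_left hc hw
        calc b / a * (w * Real.log (1+a)) = w * (b/a * Real.log (1+a)) := by ring
        _ < w * Real.log (1+b) := this
      rw [← hae] at this
      field_simp at this
      linarith [this]
    linarith [hbe ▸ this]


lemma aux_exists (k : ℕ) {c d : ℝ} (hc : 0 < c) (hcd : c < d)
    (hfc : c < ((k:ℝ)-1) * Real.log (1+c))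
    (hfd : ((k:ℝ)-1) * Real.log (1+d) < d) :
    ∃ v ∈ Set.Ioo c d, v = ((k:ℝ)-1) * Real.log (1+v) := by
  set f : ℝ → ℝ := fun x => ((k:ℝ)-1) * Real.log (1+x) - x with hf
  have hcont : ContinuousOn f (Set.Icc c d) := by
    apply ContinuousOn.sub
    · apply ContinuousOn.mul continuousOn_const
      apply ContinuousOn.log (by fun_prop)
      intro x hx
      have := hx.1
      linarith
    · exact continuousOn_id
  have h0 : (0:ℝ) ∈ Set.Ioo (f d) (f c) := by
    constructor <;> simp [hf] <;> linarith
  obtain ⟨v, hv, hfv⟩ := intermediate_value_Ioo' hcd.le hcont h0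
  exact ⟨v, hv, by simp [hf] at hfv; linarith⟩

-- bounds used for existence at all k ≥ 3
lemma aux_f1 {k : ℕ} (hk : 3 ≤ k) : (1:ℝ) < ((k:ℝ)-1) * Real.log (1+1) := by
  have hk' : (3:ℝ) ≤ (k:ℝ) := by exact_mod_cast hk
  have h2 : (0.6931471803 : ℝ) < Real.log 2 := Real.log_two_gt_d9
  norm_num
  nlinarith

lemma aux_fk3 {k : ℕ} (hk : 3 ≤ k) :
    ((k:ℝ)-1) * Real.log (1+(k:ℝ)^3) < (k:ℝ)^3 := by
  have hk' : (3:ℝ) ≤ (k:ℝ) := by exact_mod_cast hk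
  have h1 : Real.log (1+(k:ℝ)^3) ≤ Real.log ((k:ℝ)^4) := by
    apply Real.log_le_log (by positivity)
    nlinarith [sq_nonneg ((k:ℝ)), sq_nonneg ((k:ℝ)-1), pow_le_pow_left₀ (by linarith : (0:ℝ) ≤ 3) hk' 3]
  have h2 : Real.log ((k:ℝ)^4) = 4 * Real.log k := by
    rw [Real.log_pow]; norm_num
  have h3 : Real.log (k:ℝ) ≤ (k:ℝ) - 1 := Real.log_le_sub_one_of_pos (by positivity)
  have h4 : ((k:ℝ)-1) * Real.log (1+(k:ℝ)^3) ≤ ((k:ℝ)-1) * (4*((k:ℝ)-1)) := by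
    apply mul_le_mul_of_nonneg_left _ (by linarith)
    rw [h2] at h1
    linarith
  nlinarith [sq_nonneg ((k:ℝ)-3)]


lemma aux_exp2 : Real.exp 2 < 8 := by
  have h := Real.exp_one_lt_d9
  calc Real.exp 2 = Real.exp 1 * Real.exp 1 := by rw [← Real.exp_add]; norm_num
  _ < 2.7182818286 * 2.7182818286 := by nlinarith [Real.exp_pos 1]
  _ < 8 := by norm_num

lemma aux_log8 : (2:ℝ) ≤ Real.log 8 :=
  (Real.le_log_iff_exp_le (by norm_num)).2 aux_exp2.le

-- for x ≥ 8 : 2 ≤ log x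
lemma aux_log_ge_two {x : ℝ} (hx : 8 ≤ x) : 2 ≤ Real.log x :=
  aux_log8.trans (Real.log_le_log (by norm_num) hx)

-- f(k) > 0 for k ≥ 36
lemma aux_fk {k : ℕ} (hk : 36 ≤ k) : (k:ℝ) < ((k:ℝ)-1) * Real.log (1+(k:ℝ)) := by
  have hk' : (36:ℝ) ≤ (k:ℝ) := by exact_mod_cast hk
  have h1 : (2:ℝ) ≤ Real.log (1+(k:ℝ)) := aux_log_ge_two (by linarith)
  nlinarith

-- log k ≤ 2*sqrt k - 2
lemma aux_log_sqrt {x : ℝ} (hx : 1 ≤ x) : Real.log x ≤ 2 * Real.sqrt x - 2 := by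
  have hs : 0 < Real.sqrt x := Real.sqrt_pos.2 (by linarith)
  have h1 : Real.log x = 2 * Real.log (Real.sqrt x) := by
    rw [Real.log_sqrt (by linarith : (0:ℝ) ≤ x)]; ring
  have h2 : Real.log (Real.sqrt x) ≤ Real.sqrt x - 1 := Real.log_le_sub_one_of_pos hs
  linarith

-- f(k^2) < 0 for k ≥ 36
lemma aux_fk2 {k : ℕ} (hk : 36 ≤ k) :
    ((k:ℝ)-1) * Real.log (1+(k:ℝ)^2) < (k:ℝ)^2 := by
  have hk' : (36:ℝ) ≤ (k:ℝ) := by exact_mod_cast hk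
  have h1 : Real.log (1+(k:ℝ)^2) ≤ 3 * Real.log (k:ℝ) := by
    have hp := Real.log_pow (k:ℝ) 3
    have : Real.log (1+(k:ℝ)^2) ≤ Real.log ((k:ℝ)^3) := by
      apply Real.log_le_log (by positivity)
      nlinarith
    rw [hp] at this; push_cast at this; linarith
  have hs : 6 ≤ Real.sqrt (k:ℝ) := by
    rw [show (6:ℝ) = Real.sqrt 36 by rw [show (36:ℝ) = 6^2 by norm_num, Real.sqrt_sq] ; norm_num]
    exact Real.sqrt_le_sqrt hk'
  have h2 : Real.log (k:ℝ) ≤ 2 * Real.sqrt (k:ℝ) - 2 := aux_log_sqrt (by linarith)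
  have hsq : Real.sqrt (k:ℝ) ^ 2 = (k:ℝ) := Real.sq_sqrt (by positivity)
  have hlogpos : 0 ≤ Real.log (1+(k:ℝ)^2) := Real.log_nonneg (by nlinarith)
  have h3 : ((k:ℝ)-1) * Real.log (1+(k:ℝ)^2) ≤ ((k:ℝ)-1) * (3 * (2*Real.sqrt (k:ℝ) - 2)) := by
    apply mul_le_mul_of_nonneg_left _ (by linarith)
    calc Real.log (1+(k:ℝ)^2) ≤ 3 * Real.log (k:ℝ) := h1
    _ ≤ 3 * (2*Real.sqrt (k:ℝ) - 2) := by linarith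
  nlinarith [hsq, hs, sq_nonneg (Real.sqrt (k:ℝ) - 6)]


lemma aux_log1k2 {k : ℕ} (hk : 36 ≤ k) :
    Real.log (1+(k:ℝ)^2) ≤ 3 * Real.log (k:ℝ) := by
  have hk' : (36:ℝ) ≤ (k:ℝ) := by exact_mod_cast hk
  have hp := Real.log_pow (k:ℝ) 3
  have : Real.log (1+(k:ℝ)^2) ≤ Real.log ((k:ℝ)^3) := by
    apply Real.log_le_log (by positivity)
    nlinarith
  rw [hp] at this; push_cast at this; linarith

theorem part2 (Ωf : ℕ → ℝ) (hΩ : ∀ k, 0 < Ωf k) (u : ℕ → ℝ)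
    (hp : ∀ k : ℕ, 3 ≤ k → 0 < u k ∧ u k = ((k : ℝ) - 1) * Real.log (1 + u k)) :
    Tendsto (fun k : ℕ =>
        (Ωf k * (1 + u k * (1 + 1 / u k) ^ (k - 2)) / ((k : ℝ) * ((k : ℝ) - 1)))
          * (k : ℝ) / (Ωf k * Real.log k))
      atTop (nhds 1) := by
  set hi : ℕ → ℝ := fun k => 1/(((k:ℝ)-1)*Real.log k) +
    (1 + Real.log 4/Real.log k + Real.log (Real.log k)/Real.log k) * Real.exp (1/Real.log k)
    with hhi
  -- tendsto of hi to 1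
  have tcast : Tendsto (fun k : ℕ => (k:ℝ)) atTop atTop := tendsto_natCast_atTop_atTop
  have tlog : Tendsto (fun k : ℕ => Real.log k) atTop atTop := Real.tendsto_log_atTop.comp tcast
  have tD : Tendsto (fun k : ℕ => ((k:ℝ)-1) * Real.log k) atTop atTop :=
    (tendsto_atTop_add_const_right _ (-1) tcast).atTop_mul_atTop₀ tlog
  have ta : Tendsto (fun k : ℕ => 1/(((k:ℝ)-1)*Real.log k)) atTop (nhds 0) :=
    tendsto_const_nhds.div_atTop tD
  have tb : Tendsto (fun k : ℕ => Real.log 4/Real.log k) atTop (nhds 0) :=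
    tendsto_const_nhds.div_atTop tlog
  have tc : Tendsto (fun k : ℕ => Real.log (Real.log k)/Real.log k) atTop (nhds 0) :=
    (Real.isLittleO_log_id_atTop.comp_tendsto tlog).tendsto_div_nhds_zero
  have td : Tendsto (fun k : ℕ => Real.exp (1/Real.log k)) atTop (nhds 1) := by
    have h0 : Tendsto (fun k : ℕ => 1/Real.log k) atTop (nhds 0) :=
      tendsto_const_nhds.div_atTop tlog
    have := (Real.continuous_exp.tendsto 0).comp h0
    simpa [Function.comp_def] using this
  have thi : Tendsto hi atTop (nhds 1) := by
    have h := ta.add ((((tendsto_const_nhds (x := (1:ℝ))).add tb).add tc).mul td)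
    rw [hhi]
    convert h using 2
    norm_num
  -- eventual bounds
  have key : ∀ᶠ k in atTop, (1:ℝ) ≤
        (Ωf k * (1 + u k * (1 + 1 / u k) ^ (k - 2)) / ((k : ℝ) * ((k : ℝ) - 1)))
          * (k : ℝ) / (Ωf k * Real.log k) ∧
        (Ωf k * (1 + u k * (1 + 1 / u k) ^ (k - 2)) / ((k : ℝ) * ((k : ℝ) - 1)))
          * (k : ℝ) / (Ωf k * Real.log k) ≤ hi k := by
    filter_upwards [eventually_ge_atTop 36] with k hk36
    have hk' : (36:ℝ) ≤ (k:ℝ) := by exact_mod_cast hk36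
    obtain ⟨hu0, hue⟩ := hp k (by omega)
    have hlog2 : 2 ≤ Real.log (k:ℝ) := aux_log_ge_two (by linarith)
    have hlogpos : 0 < Real.log (k:ℝ) := by linarith
    -- bounds on u k via uniqueness
    obtain ⟨v, hv, hve⟩ := aux_exists k (c := (k:ℝ)) (d := (k:ℝ)^2)
      (by linarith) (by nlinarith) (aux_fk hk36) (aux_fk2 hk36)
    have huv : u k = v := aux_unique ⟨hu0, hue⟩ ⟨by linarith [hv.1], hve⟩
    have hlow : (k:ℝ) < u k := huv ▸ hv.1
    have hhigh : u k < (k:ℝ)^2 := huv ▸ hv.2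
    have hl2 : ((k:ℝ)-1) * Real.log (k:ℝ) ≤ u k := by
      rw [hue]
      exact mul_le_mul_of_nonneg_left
        (Real.log_le_log (by linarith) (by linarith)) (by linarith)
    have hub : u k ≤ 3*(k:ℝ)*Real.log (k:ℝ) := by
      rw [hue]
      calc ((k:ℝ)-1) * Real.log (1 + u k)
          ≤ ((k:ℝ)-1) * (3 * Real.log (k:ℝ)) := by
            apply mul_le_mul_of_nonneg_left _ (by linarith)
            calc Real.log (1 + u k) ≤ Real.log (1+(k:ℝ)^2) :=
              Real.log_le_log (by linarith) (by linarith)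
            _ ≤ 3 * Real.log (k:ℝ) := aux_log1k2 hk36
      _ ≤ 3*(k:ℝ)*Real.log (k:ℝ) := by nlinarith
    set P : ℝ := (1 + 1 / u k) ^ (k - 2) with hPdef
    have hP1 : 1 ≤ P := one_le_pow₀ ((le_add_iff_nonneg_right 1).2 (by positivity))
    have hPe : P ≤ Real.exp (1/Real.log (k:ℝ)) := by
      have s1 : P ≤ Real.exp (1 / u k) ^ (k-2) := by
        apply pow_le_pow_left₀ (by positivity)
        linarith [Real.add_one_le_exp (1 / u k)]
      have s2 : Real.exp (1 / u k) ^ (k-2) = Real.exp (((k:ℕ) - 2 : ℕ) * (1 / u k)) := by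
        rw [← Real.exp_nat_mul]
      have s3 : (((k:ℕ) - 2 : ℕ) : ℝ) * (1 / u k) ≤ 1/Real.log (k:ℝ) := by
        have hc : (((k:ℕ) - 2 : ℕ) : ℝ) = (k:ℝ) - 2 := by
          have : (2:ℕ) ≤ k := by omega
          push_cast [Nat.cast_sub this]
          ring
        rw [hc, mul_one_div, div_le_div_iff₀ hu0 hlogpos]
        nlinarith
      calc P ≤ _ := s1
      _ = _ := s2
      _ ≤ Real.exp (1/Real.log (k:ℝ)) := Real.exp_le_exp.2 s3
    have hD : 0 < ((k:ℝ)-1) * Real.log (k:ℝ) := by nlinarith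
    have hE : (Ωf k * (1 + u k * P) / ((k : ℝ) * ((k : ℝ) - 1)))
          * (k : ℝ) / (Ωf k * Real.log k)
        = (1 + u k * P) / (((k:ℝ)-1) * Real.log (k:ℝ)) := by
      have h1 : Ωf k ≠ 0 := ne_of_gt (hΩ k)
      have h2 : (k:ℝ) ≠ 0 := by positivity
      have h3 : (k:ℝ) - 1 ≠ 0 := by intro h; nlinarith [h]
      have h4 : Real.log (k:ℝ) ≠ 0 := ne_of_gt hlogpos
      field_simp
    rw [hE]
    constructor
    · rw [le_div_iff₀ hD, one_mul]
      nlinarith [mul_le_mul_of_nonneg_left hP1 hu0.le]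
    · -- upper bound
      have hsplit : (1 + u k * P) / (((k:ℝ)-1) * Real.log (k:ℝ))
          = 1/(((k:ℝ)-1) * Real.log (k:ℝ)) + (Real.log (1 + u k)/Real.log (k:ℝ)) * P := by
        have hkm1 : ((k:ℝ)-1) ≠ 0 := by
          have h36 : (36:ℝ) ≤ (k:ℝ) := by exact_mod_cast hk36
          intro h; rw [sub_eq_zero] at h; rw [h] at h36; norm_num at h36
        have h9 : u k / ((((k:ℝ))-1) * Real.log (k:ℝ)) = Real.log (1+u k) / Real.log (k:ℝ) := by
          conv_lhs => rw [hue]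
          rw [mul_div_mul_left _ _ hkm1]
        rw [add_div]
        congr 1
        rw [mul_comm (u k) P, mul_div_assoc, h9, mul_comm]
      rw [hsplit, hhi]
      have hnum : Real.log (1 + u k) ≤ Real.log 4 + Real.log (k:ℝ) + Real.log (Real.log (k:ℝ)) := by
        have h1 : 1 + u k ≤ 4 * (k:ℝ) * Real.log (k:ℝ) := by nlinarith
        have h2 : Real.log (4 * (k:ℝ) * Real.log (k:ℝ))
            = Real.log 4 + Real.log (k:ℝ) + Real.log (Real.log (k:ℝ)) := by
          rw [Real.log_mul (by positivity) (by positivity), Real.log_mul (by norm_num) (by positivity)]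
        rw [← h2]
        exact Real.log_le_log (by linarith) h1
      have hfinal : (Real.log (1 + u k)/Real.log (k:ℝ)) * P ≤
          (1 + Real.log 4/Real.log (k:ℝ) + Real.log (Real.log (k:ℝ))/Real.log (k:ℝ))
            * Real.exp (1/Real.log (k:ℝ)) := by
        have heq : 1 + Real.log 4/Real.log (k:ℝ) + Real.log (Real.log (k:ℝ))/Real.log (k:ℝ)
            = (Real.log 4 + Real.log (k:ℝ) + Real.log (Real.log (k:ℝ)))/Real.log (k:ℝ) := by
          field_simp
          ring
        rw [heq]
        have hPn : (0:ℝ) ≤ P := by linarith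
        have h4n : (0:ℝ) ≤ Real.log 4 := Real.log_nonneg (by norm_num)
        have hlln : (0:ℝ) ≤ Real.log (Real.log (k:ℝ)) := Real.log_nonneg (by linarith)
        exact mul_le_mul ((div_le_div_iff_of_pos_right hlogpos).2 hnum) hPe hPn
          (by positivity)
      linarith
  apply tendsto_of_tendsto_of_tendsto_of_le_of_le' tendsto_const_nhds thi
  · exact key.mono fun k h => h.1
  · exact key.mono fun k h => h.2

end auxstmt11

theorem stmt11 (Ωf : ℕ → ℝ) (hΩ : ∀ k, 0 < Ωf k) :
    -- unique positive solution of u = (k-1) log(1+u)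
    (∀ k : ℕ, 3 ≤ k →
      ∃! u : ℝ, 0 < u ∧ u = ((k : ℝ) - 1) * Real.log (1 + u)) ∧
    -- α* = (Ω_k/k)(log k + o(log k)), i.e. α* k/(Ω_k log k) → 1
    (∀ u : ℕ → ℝ,
      (∀ k : ℕ, 3 ≤ k → 0 < u k ∧ u k = ((k : ℝ) - 1) * Real.log (1 + u k)) →
      Tendsto (fun k : ℕ =>
          (Ωf k * (1 + u k * (1 + 1 / u k) ^ (k - 2)) / ((k : ℝ) * ((k : ℝ) - 1)))
            * (k : ℝ) / (Ωf k * Real.log k))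
        atTop (nhds 1)) := by
  constructor
  · intro k hk
    have hk' : (3:ℝ) ≤ (k:ℝ) := by exact_mod_cast hk
    obtain ⟨v, hv, hve⟩ := aux_exists k (c := 1) (d := (k:ℝ)^3)
      one_pos (one_lt_pow₀ (by linarith : (1:ℝ) < (k:ℝ)) (by norm_num)) (by simpa using aux_f1 hk) (aux_fk3 hk)
    refine ⟨v, ⟨by linarith [hv.1], hve⟩, fun y hy => aux_unique hy ⟨by linarith [hv.1], hve⟩⟩
  · intro u hp
    exact part2 Ωf hΩ u hp
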